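/- The monomials ā_S for S ∈ nbb(G) are linearly independent in the quadratic closure Ā(G) of the Orlik-Solomon algebra. -/

import Mathlib

/-- A set `S` is line-closed in the matroid `M` if it contains the closure of
each pair of its elements. -/
def IsLineClosed {n : ℕ} (M : Matroid (Fin n)) (S : Set (Fin n)) : Prop :=
  ∀ i ∈ S, ∀ j ∈ S, M.closure {i, j} ⊆ S

/-- The line-closure of `S`: the intersection of all line-closed sets containing `S`. -/
def lineClosure {n : ℕ} (M : Matroid (Fin n)) (S : Set (Fin n)) : Set (Fin n) :=
  ⋂₀ {T | S ⊆ T ∧ IsLineClosed M T}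

/-- The generator `e i` of the exterior algebra on `e₁, …, eₙ`. -/
noncomputable def gen (K : Type*) [CommRing K] {n : ℕ} (i : Fin n) :
    ExteriorAlgebra K (Fin n → K) :=
  ExteriorAlgebra.ι K (Pi.single i 1)

/-- The monomial `e_{i₁} ∧ ⋯ ∧ e_{i_p}` indexed by a list. -/
noncomputable def eProd (K : Type*) [CommRing K] {n : ℕ} (l : List (Fin n)) :
    ExteriorAlgebra K (Fin n → K) :=
  (l.map (gen K)).prod

/-- The boundary `∂ e_S = Σ (-1)^{k-1} e_{S - i_k}` of the monomial indexed by a list. -/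
noncomputable def bdryL (K : Type*) [CommRing K] {n : ℕ} (l : List (Fin n)) :
    ExteriorAlgebra K (Fin n → K) :=
  ∑ k : Fin l.length, ((-1 : K) ^ (k : ℕ)) • eProd K (l.eraseIdx k)

/-- The monomial `e_S` for a finite set `S`, listed in increasing order. -/
noncomputable def eS (K : Type*) [CommRing K] {n : ℕ} (S : Finset (Fin n)) :
    ExteriorAlgebra K (Fin n → K) :=
  eProd K (S.sort (· ≤ ·))

/-- The boundary `∂ e_S` for a finite set `S`, listed in increasing order. -/
noncomputable def bdryS (K : Type*) [CommRing K] {n : ℕ} (S : Finset (Fin n)) :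
    ExteriorAlgebra K (Fin n → K) :=
  bdryL K (S.sort (· ≤ ·))

/-- The quadratic part `𝒥` of the Orlik–Solomon ideal: the (two-sided) ideal of the
exterior algebra generated by the boundaries of dependent 3-element sets, as a
`K`-submodule. -/
noncomputable def OSJ (K : Type*) [CommRing K] {n : ℕ} (M : Matroid (Fin n)) :
    Submodule K (ExteriorAlgebra K (Fin n → K)) :=
  Submodule.span K {z | ∃ x y : ExteriorAlgebra K (Fin n → K), ∃ S : Finset (Fin n),
    S.card = 3 ∧ M.Dep ↑S ∧ z = x * bdryS K S * y}

/-- The Orlik–Solomon ideal `ℐ`: the (two-sided) ideal generated by the boundaries of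
all dependent sets, as a `K`-submodule. -/
noncomputable def OSI (K : Type*) [CommRing K] {n : ℕ} (M : Matroid (Fin n)) :
    Submodule K (ExteriorAlgebra K (Fin n → K)) :=
  Submodule.span K {z | ∃ x y : ExteriorAlgebra K (Fin n → K), ∃ S : Finset (Fin n), M.Dep ↑S ∧ z = x * bdryS K S * y}

/-- We encode a linear ordering of `[n]` by a permutation `π`: the element `i` comes
before `j` when `π i ≤ π j`.  `IsMinWrt π S m` says `m` is the minimum of `S`. -/
def IsMinWrt {n : ℕ} (π : Equiv.Perm (Fin n)) (S : Set (Fin n)) (m : Fin n) : Prop :=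
  m ∈ S ∧ ∀ j ∈ S, π m ≤ π j

/-- `S` is an nbb set for the linear order `π`. -/
def IsNbb {n : ℕ} (M : Matroid (Fin n)) (π : Equiv.Perm (Fin n))
    (S : Finset (Fin n)) : Prop :=
  ∀ i ∈ S, IsMinWrt π (lineClosure M {j | j ∈ S ∧ π i ≤ π j}) i

lemma subset_lineClosure {n : ℕ} (M : Matroid (Fin n)) (S : Set (Fin n)) :
    S ⊆ lineClosure M S := fun x hx => Set.mem_sInter.2 fun _ hT => hT.1 hx

lemma isLineClosed_lineClosure {n : ℕ} (M : Matroid (Fin n)) (S : Set (Fin n)) :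
    IsLineClosed M (lineClosure M S) := by
  intro i hi j hj x hx
  exact Set.mem_sInter.2 fun T hT =>
    hT.2 i (Set.mem_sInter.1 hi T hT) j (Set.mem_sInter.1 hj T hT) hx

lemma lineClosure_mono {n : ℕ} (M : Matroid (Fin n)) {S T : Set (Fin n)} (h : S ⊆ T) :
    lineClosure M S ⊆ lineClosure M T :=
  Set.sInter_subset_sInter (fun _ hU => ⟨h.trans hU.1, hU.2⟩)

/-- indicator vector of an element w.r.t. a family of sets -/
noncomputable def indVec (K : Type*) [Field K] {n p : ℕ} (W : Fin p → Set (Fin n))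
    (i : Fin n) : Fin p → K := fun k => (W k).indicator (fun _ => (1:K)) i

lemma indVec_of_mem (K : Type*) [Field K] {n p : ℕ} {W : Fin p → Set (Fin n)}
    {i : Fin n} {k : Fin p} (h : i ∈ W k) : indVec K W i k = 1 :=
  Set.indicator_of_mem h _

lemma indVec_of_not_mem (K : Type*) [Field K] {n p : ℕ} {W : Fin p → Set (Fin n)}
    {i : Fin n} {k : Fin p} (h : i ∉ W k) : indVec K W i k = 0 :=
  Set.indicator_of_notMem h _

lemma indVec_eq_of_iff (K : Type*) [Field K] {n p : ℕ} {W : Fin p → Set (Fin n)}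
    {i : Fin n} {k k' : Fin p} (h : i ∈ W k ↔ i ∈ W k') :
    indVec K W i k = indVec K W i k' := by
  rcases Classical.em (i ∈ W k) with hm | hm
  · rw [indVec_of_mem K hm, indVec_of_mem K (h.mp hm)]
  · rw [indVec_of_not_mem K hm, indVec_of_not_mem K (fun hh => hm (h.mpr hh))]

/-- exactly one of a triple belongs to `W k` -/
def ExOne {n p : ℕ} (W : Fin p → Set (Fin n)) (x1 x2 x3 : Fin n) (k : Fin p) : Prop :=
  (x1 ∈ W k ∧ x2 ∉ W k ∧ x3 ∉ W k) ∨ (x2 ∈ W k ∧ x1 ∉ W k ∧ x3 ∉ W k)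
    ∨ (x3 ∈ W k ∧ x1 ∉ W k ∧ x2 ∉ W k)

lemma exone_class {n p : ℕ} (W : Fin p → Set (Fin n)) (x1 x2 x3 : Fin n) (k : Fin p)
    (h : (x1 ∈ W k → x2 ∈ W k → x3 ∈ W k) ∧ (x1 ∈ W k → x3 ∈ W k → x2 ∈ W k)
      ∧ (x2 ∈ W k → x3 ∈ W k → x1 ∈ W k)) :
    (x1 ∈ W k ∧ x2 ∈ W k ∧ x3 ∈ W k)
      ∨ (x1 ∉ W k ∧ x2 ∉ W k ∧ x3 ∉ W k) ∨ ExOne W x1 x2 x3 k := by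
  unfold ExOne
  revert h
  generalize (x1 ∈ W k) = A1
  generalize (x2 ∈ W k) = A2
  generalize (x3 ∈ W k) = A3
  tauto

lemma exone_pattern {n p : ℕ} (W : Fin p → Set (Fin n)) (x1 x2 x3 : Fin n) (k k0 : Fin p)
    (hchain : W k ⊆ W k0 ∨ W k0 ⊆ W k)
    (hk0 : ExOne W x1 x2 x3 k0) (hk : ExOne W x1 x2 x3 k) :
    ((x1 ∈ W k ↔ x1 ∈ W k0) ∧ (x2 ∈ W k ↔ x2 ∈ W k0) ∧ (x3 ∈ W k ↔ x3 ∈ W k0)) := by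
  unfold ExOne at hk hk0
  rcases hchain with hsub | hsub
  all_goals {
    have e1 := @hsub x1
    have e2 := @hsub x2
    have e3 := @hsub x3
    clear hsub
    revert e1 e2 e3 hk hk0
    generalize (x1 ∈ W k) = A1
    generalize (x2 ∈ W k) = A2
    generalize (x3 ∈ W k) = A3
    generalize (x1 ∈ W k0) = B1
    generalize (x2 ∈ W k0) = B2
    generalize (x3 ∈ W k0) = B3
    tauto }

/-- Key parallelism lemma. -/
lemma triple_parallel (K : Type*) [Field K] {n : ℕ} (M : Matroid (Fin n))
    (hsimple : ∀ i j : Fin n, i ≠ j → M.Indep {i, j}) {p : ℕ}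
    (W : Fin p → Set (Fin n)) (hWlc : ∀ k, IsLineClosed M (W k))
    (hWchain : ∀ k k', W k ⊆ W k' ∨ W k' ⊆ W k)
    {x1 x2 x3 : Fin n} (h12 : x1 ≠ x2) (h13 : x1 ≠ x3) (h23 : x2 ≠ x3)
    (hdep : M.Dep {x1, x2, x3}) :
    ∃ s t : K, ∃ w : Fin p → K,
      indVec K W x2 - indVec K W x1 = s • w ∧ indVec K W x3 - indVec K W x1 = t • w := by
  have hc3 : x3 ∈ M.closure {x1, x2} := by
    have heq : (insert x3 ({x1, x2} : Set (Fin n))) = {x1, x2, x3} := by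
      ext y; simp only [Set.mem_insert_iff, Set.mem_singleton_iff]; tauto
    have hdep' : M.Dep (insert x3 ({x1, x2} : Set (Fin n))) := by rw [heq]; exact hdep
    exact (((hsimple x1 x2 h12).insert_dep_iff).mp hdep').1
  have hc2 : x2 ∈ M.closure {x1, x3} := by
    have heq : (insert x2 ({x1, x3} : Set (Fin n))) = {x1, x2, x3} := by
      ext y; simp only [Set.mem_insert_iff, Set.mem_singleton_iff]; tauto
    have hdep' : M.Dep (insert x2 ({x1, x3} : Set (Fin n))) := by rw [heq]; exact hdep
    exact (((hsimple x1 x3 h13).insert_dep_iff).mp hdep').1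
  have hc1 : x1 ∈ M.closure {x2, x3} :=
    (((hsimple x2 x3 h23).insert_dep_iff).mp hdep).1
  have htwo : ∀ k, (x1 ∈ W k → x2 ∈ W k → x3 ∈ W k) ∧ (x1 ∈ W k → x3 ∈ W k → x2 ∈ W k)
      ∧ (x2 ∈ W k → x3 ∈ W k → x1 ∈ W k) := fun k =>
    ⟨fun h1 h2 => hWlc k x1 h1 x2 h2 hc3, fun h1 h3 => hWlc k x1 h1 x3 h3 hc2,
      fun h2 h3 => hWlc k x2 h2 x3 h3 hc1⟩
  have hclass : ∀ k, (x1 ∈ W k ∧ x2 ∈ W k ∧ x3 ∈ W k)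
      ∨ (x1 ∉ W k ∧ x2 ∉ W k ∧ x3 ∉ W k) ∨ ExOne W x1 x2 x3 k :=
    fun k => exone_class W x1 x2 x3 k (htwo k)
  have hnotEO_all : ∀ k, x1 ∈ W k → x2 ∈ W k → x3 ∈ W k → ¬ ExOne W x1 x2 x3 k := by
    intro k h1 h2 h3
    rintro (⟨-, hb, -⟩ | ⟨-, hb, -⟩ | ⟨-, hb, -⟩)
    · exact hb h2
    · exact hb h1
    · exact hb h1
  have hnotEO_none : ∀ k, x1 ∉ W k → x2 ∉ W k → x3 ∉ W k → ¬ ExOne W x1 x2 x3 k := by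
    intro k h1 h2 h3
    rintro (⟨ha, -, -⟩ | ⟨ha, -, -⟩ | ⟨ha, -, -⟩)
    · exact h1 ha
    · exact h2 ha
    · exact h3 ha
  rcases Classical.em (∃ k0, ExOne W x1 x2 x3 k0) with hEO | hEO
  · obtain ⟨k0, hk0⟩ := hEO
    have hpat : ∀ k, ExOne W x1 x2 x3 k → ((x1 ∈ W k ↔ x1 ∈ W k0) ∧ (x2 ∈ W k ↔ x2 ∈ W k0)
        ∧ (x3 ∈ W k ↔ x3 ∈ W k0)) :=
      fun k hk => exone_pattern W x1 x2 x3 k k0 (hWchain k k0) hk0 hk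
    refine ⟨indVec K W x2 k0 - indVec K W x1 k0, indVec K W x3 k0 - indVec K W x1 k0,
      fun k => ({k | ExOne W x1 x2 x3 k}).indicator (fun _ => (1:K)) k, ?_, ?_⟩
    · funext k
      simp only [Pi.sub_apply, Pi.smul_apply, smul_eq_mul]
      rcases hclass k with ⟨h1, h2, h3⟩ | ⟨h1, h2, h3⟩ | hk
      · rw [indVec_of_mem K h1, indVec_of_mem K h2,
          Set.indicator_of_notMem (show k ∉ {k' | ExOne W x1 x2 x3 k'} from hnotEO_all k h1 h2 h3)]
        ring
      · rw [indVec_of_not_mem K h1, indVec_of_not_mem K h2,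
          Set.indicator_of_notMem (show k ∉ {k' | ExOne W x1 x2 x3 k'} from hnotEO_none k h1 h2 h3)]
        ring
      · obtain ⟨e1, e2, e3⟩ := hpat k hk
        rw [Set.indicator_of_mem (show k ∈ {k' | ExOne W x1 x2 x3 k'} from hk),
          indVec_eq_of_iff K e1, indVec_eq_of_iff K e2]
        ring
    · funext k
      simp only [Pi.sub_apply, Pi.smul_apply, smul_eq_mul]
      rcases hclass k with ⟨h1, h2, h3⟩ | ⟨h1, h2, h3⟩ | hk
      · rw [indVec_of_mem K h1, indVec_of_mem K h3,
          Set.indicator_of_notMem (show k ∉ {k' | ExOne W x1 x2 x3 k'} from hnotEO_all k h1 h2 h3)]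
        ring
      · rw [indVec_of_not_mem K h1, indVec_of_not_mem K h3,
          Set.indicator_of_notMem (show k ∉ {k' | ExOne W x1 x2 x3 k'} from hnotEO_none k h1 h2 h3)]
        ring
      · obtain ⟨e1, e2, e3⟩ := hpat k hk
        rw [Set.indicator_of_mem (show k ∈ {k' | ExOne W x1 x2 x3 k'} from hk),
          indVec_eq_of_iff K e1, indVec_eq_of_iff K e3]
        ring
  · have hEO' : ∀ k, ¬ ExOne W x1 x2 x3 k := fun k hk => hEO ⟨k, hk⟩
    refine ⟨1, 1, 0, ?_, ?_⟩
    · funext k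
      simp only [Pi.sub_apply, Pi.smul_apply, Pi.zero_apply, smul_eq_mul, mul_zero]
      rcases hclass k with ⟨h1, h2, h3⟩ | ⟨h1, h2, h3⟩ | hk
      · rw [indVec_of_mem K h1, indVec_of_mem K h2]; ring
      · rw [indVec_of_not_mem K h1, indVec_of_not_mem K h2]; ring
      · exact absurd hk (hEO' k)
    · funext k
      simp only [Pi.sub_apply, Pi.smul_apply, Pi.zero_apply, smul_eq_mul, mul_zero]
      rcases hclass k with ⟨h1, h2, h3⟩ | ⟨h1, h2, h3⟩ | hk
      · rw [indVec_of_mem K h1, indVec_of_mem K h3]; ring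
      · rw [indVec_of_not_mem K h1, indVec_of_not_mem K h3]; ring
      · exact absurd hk (hEO' k)

/-- the ℕ-indexed family of alternating forms: det in degree `p`, zero elsewhere -/
noncomputable def phiFam (K : Type*) [Field K] (p : ℕ) :
    (i : ℕ) → ((Fin p → K) [⋀^Fin i]→ₗ[K] K) :=
  fun i => if h : i = p then
    (Matrix.detRowAlternating : (Fin p → K) [⋀^Fin p]→ₗ[K] K).domDomCongr (finCongr h.symm)
  else 0

lemma phiFam_ne (K : Type*) [Field K] {p i : ℕ} (h : i ≠ p) : phiFam K p i = 0 :=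
  dif_neg h

lemma phiFam_cast (K : Type*) [Field K] {p a : ℕ} (h : a = p)
    (v : Fin a → (Fin p → K)) :
    phiFam K p a v = Matrix.detRowAlternating (fun j : Fin p => v (Fin.cast h.symm j)) := by
  subst h
  simp only [phiFam, dif_pos rfl]
  rfl

/-- the linear map sending the basis vector `e i` to the indicator vector of `i` -/
noncomputable def fW (K : Type*) [Field K] {n p : ℕ} (W : Fin p → Set (Fin n)) :
    (Fin n → K) →ₗ[K] (Fin p → K) :=
  Matrix.mulVecLin (Matrix.of fun k i => indVec K W i k)

lemma fW_single (K : Type*) [Field K] {n p : ℕ} (W : Fin p → Set (Fin n)) (i : Fin n) :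
    fW K W (Pi.single i 1) = indVec K W i := by
  funext k
  simp [fW, Matrix.mulVecLin, Matrix.mulVec_single]

/-- the functional: det-in-degree-p of the image under `fW` -/
noncomputable def phiW (K : Type*) [Field K] {n p : ℕ} (W : Fin p → Set (Fin n)) :
    ExteriorAlgebra K (Fin n → K) →ₗ[K] K :=
  (ExteriorAlgebra.liftAlternating (phiFam K p)).comp
    (ExteriorAlgebra.map (fW K W)).toLinearMap

lemma eProd_eq_ιMulti (K : Type*) [Field K] {n : ℕ} (l : List (Fin n)) :
    eProd K l = ExteriorAlgebra.ιMulti K l.length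
      (fun q => Pi.single (l.get q) (1:K)) := by
  rw [ExteriorAlgebra.ιMulti_apply]
  show (l.map (gen K)).prod = _
  congr 1
  conv_lhs => rw [← List.ofFn_get l]
  rw [List.map_ofFn]
  rfl

lemma phiW_eProd (K : Type*) [Field K] {n p : ℕ} (W : Fin p → Set (Fin n))
    (l : List (Fin n)) :
    phiW K W (eProd K l) = phiFam K p l.length (fun q => indVec K W (l.get q)) := by
  rw [phiW, LinearMap.comp_apply, AlgHom.toLinearMap_apply, eProd_eq_ιMulti,
    ExteriorAlgebra.map_apply_ιMulti, ExteriorAlgebra.liftAlternating_apply_ιMulti]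
  congr 1
  funext q
  exact fW_single K W (l.get q)

lemma phiW_bdryS (K : Type*) [Field K] {n p : ℕ} (M : Matroid (Fin n))
    (hsimple : ∀ i j : Fin n, i ≠ j → M.Indep {i, j})
    (W : Fin p → Set (Fin n)) (hWlc : ∀ k, IsLineClosed M (W k))
    (hWchain : ∀ k k', W k ⊆ W k' ∨ W k' ⊆ W k)
    (C : Finset (Fin n)) (hC3 : C.card = 3) (hdep : M.Dep ↑C) :
    ExteriorAlgebra.map (fW K W) (bdryS K C) = 0 := by
  have hlen : (C.sort (· ≤ ·)).length = 3 := by rw [Finset.length_sort, hC3]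
  obtain ⟨x1, x2, x3, hl⟩ := List.length_eq_three.mp hlen
  have hnd : (C.sort (· ≤ ·)).Nodup := Finset.sort_nodup _ _
  rw [hl] at hnd
  have h12 : x1 ≠ x2 := by simp at hnd; tauto
  have h13 : x1 ≠ x3 := by simp at hnd; tauto
  have h23 : x2 ≠ x3 := by simp at hnd; tauto
  have hCset : (↑C : Set (Fin n)) = {x1, x2, x3} := by
    rw [← Finset.sort_toFinset C (· ≤ ·), hl]
    simp
  have hdep' : M.Dep ({x1, x2, x3} : Set (Fin n)) := by rwa [hCset] at hdep
  obtain ⟨s, t, w, hs, ht⟩ :=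
    triple_parallel K M hsimple W hWlc hWchain h12 h13 h23 hdep'
  have hbd : bdryS K C = eProd K [x2, x3] - eProd K [x1, x3] + eProd K [x1, x2] := by
    rw [bdryS, hl]
    have : bdryL K [x1, x2, x3]
        = ∑ k : Fin 3, ((-1 : K) ^ (k : ℕ)) • eProd K ([x1, x2, x3].eraseIdx k) := rfl
    rw [this, Fin.sum_univ_three]
    norm_num
    abel
  have hpair : ∀ a b : Fin n, ExteriorAlgebra.map (fW K W) (eProd K [a, b])
      = ExteriorAlgebra.ι K (indVec K W a) * ExteriorAlgebra.ι K (indVec K W b) := by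
    intro a b
    have : eProd K [a, b] = gen K a * gen K b := by simp [eProd]
    rw [this, map_mul]
    unfold gen
    rw [ExteriorAlgebra.map_apply_ι, ExteriorAlgebra.map_apply_ι, fW_single, fW_single]
  rw [hbd, map_add, map_sub, hpair, hpair, hpair]
  set u1 := ExteriorAlgebra.ι K (indVec K W x1) with hu1
  set u2 := ExteriorAlgebra.ι K (indVec K W x2) with hu2
  set u3 := ExteriorAlgebra.ι K (indVec K W x3) with hu3
  have hz : (u2 - u1) * (u3 - u1) = 0 := by
    rw [hu1, hu2, hu3, ← map_sub, ← map_sub, hs, ht, map_smul, map_smul,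
      smul_mul_assoc, mul_smul_comm, ExteriorAlgebra.ι_sq_zero]
    simp
  have e2 : u2 * u1 = -(u1 * u2) := by
    have := ExteriorAlgebra.ι_add_mul_swap (R := K) (indVec K W x2) (indVec K W x1)
    rw [← hu1, ← hu2] at this
    exact eq_neg_of_add_eq_zero_left this
  have key : u2 * u3 - u1 * u3 + u1 * u2 = (u2 - u1) * (u3 - u1) := by
    rw [sub_mul, mul_sub, mul_sub, hu1]
    rw [ExteriorAlgebra.ι_sq_zero, ← hu1, e2]
    abel
  rw [key, hz]


lemma det_perm_staircase (K : Type*) [Field K] {p : ℕ} {α : Type*} [LinearOrder α]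
    (f : Fin p → α) (hf : Function.Injective f) :
    Matrix.det (Matrix.of fun j k => if f k ≤ f j then (1:K) else 0) = 1 := by
  let τ := Tuple.sort f
  have hsm : StrictMono (f ∘ τ) :=
    (Tuple.monotone_sort f).strictMono_of_injective (hf.comp τ.injective)
  have hA : (Matrix.of fun j k => if f k ≤ f j then (1:K) else 0)
      = (Matrix.of fun a b : Fin p => if b ≤ a then (1:K) else 0).submatrix τ.symm τ.symm := by
    ext j k
    simp only [Matrix.submatrix_apply, Matrix.of_apply]
    have h1 : f j = (f ∘ τ) (τ.symm j) := by simp [τ]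
    have h2 : f k = (f ∘ τ) (τ.symm k) := by simp [τ]
    rw [h1, h2]
    exact if_congr hsm.le_iff_le rfl rfl
  rw [hA, Matrix.det_submatrix_equiv_self,
    Matrix.det_of_lowerTriangular _ ?ht]
  · apply Finset.prod_eq_one; intro i _; simp
  case ht =>
    intro i j hij
    have hlt : i < j := hij
    simp only [Matrix.of_apply]
    rw [if_neg (not_le.mpr hlt)]

lemma det_ne_zero_perm (K : Type*) [Field K] {p : ℕ} (A : Matrix (Fin p) (Fin p) K)
    (h : A.det ≠ 0) : ∃ σ : Equiv.Perm (Fin p), ∀ k, A (σ k) k ≠ 0 := by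
  by_contra hcon
  push_neg at hcon
  apply h
  rw [Matrix.det_apply]
  apply Finset.sum_eq_zero
  intro σ _
  obtain ⟨k, hk⟩ := hcon σ
  have hz : (∏ i : Fin p, A (σ i) i) = 0 := Finset.prod_eq_zero (Finset.mem_univ k) hk
  rw [hz, smul_zero]

lemma sum_sort_get {n : ℕ} (T : Finset (Fin n)) (f : Fin n → ℕ) {p : ℕ}
    (h : (T.sort (· ≤ ·)).length = p) :
    ∑ x ∈ T, f x = ∑ k : Fin p, f ((T.sort (· ≤ ·)).get (Fin.cast h.symm k)) := by
  have hmem : ∀ k : Fin p, (T.sort (· ≤ ·)).get (Fin.cast h.symm k) ∈ T :=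
    fun k => (Finset.mem_sort (α := Fin n) (· ≤ ·)).mp (List.get_mem _ _)
  have hinj : ∀ a₁ : Fin p, a₁ ∈ Finset.univ → ∀ a₂ ∈ Finset.univ,
      (T.sort (· ≤ ·)).get (Fin.cast h.symm a₁) = (T.sort (· ≤ ·)).get (Fin.cast h.symm a₂)
        → a₁ = a₂ := by
    intro a _ b _ hab
    have hget := List.nodup_iff_injective_get.mp (Finset.sort_nodup T (· ≤ ·)) hab
    simpa [Fin.ext_iff] using hget
  have hsurj : ∀ x ∈ T, ∃ a, ∃ ha : a ∈ Finset.univ,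
      (T.sort (· ≤ ·)).get (Fin.cast h.symm a) = x := by
    intro x hx
    obtain ⟨q, hq⟩ := List.mem_iff_get.mp ((Finset.mem_sort (α := Fin n) (· ≤ ·)).mpr hx)
    refine ⟨Fin.cast h q, Finset.mem_univ _, ?_⟩
    have : Fin.cast h.symm (Fin.cast h q) = q := rfl
    rw [this, hq]
  exact (Finset.sum_bij (fun k _ => (T.sort (· ≤ ·)).get (Fin.cast h.symm k))
    (fun k _ => hmem k) hinj hsurj (fun k _ => rfl)).symm

lemma phiW_OSJ (K : Type*) [Field K] {n p : ℕ} (M : Matroid (Fin n))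
    (hsimple : ∀ i j : Fin n, i ≠ j → M.Indep {i, j})
    (W : Fin p → Set (Fin n)) (hWlc : ∀ k, IsLineClosed M (W k))
    (hWchain : ∀ k k', W k ⊆ W k' ∨ W k' ⊆ W k) :
    ∀ z ∈ OSJ K M, phiW K W z = 0 := by
  have hle : OSJ K M ≤ LinearMap.ker (phiW K W) := by
    rw [OSJ]
    apply Submodule.span_le.mpr
    rintro z ⟨x, y, C, hC3, hdep, rfl⟩
    simp only [SetLike.mem_coe, LinearMap.mem_ker]
    show ExteriorAlgebra.liftAlternating (phiFam K p)
      (ExteriorAlgebra.map (fW K W) (x * bdryS K C * y)) = 0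
    have hm : ExteriorAlgebra.map (fW K W) (x * bdryS K C * y) = 0 := by
      rw [map_mul, map_mul, phiW_bdryS K M hsimple W hWlc hWchain C hC3 hdep,
        mul_zero, zero_mul]
    rw [hm, map_zero]
  exact fun z hz => LinearMap.mem_ker.mp (hle hz)

lemma phiW_eS (K : Type*) [Field K] {n p : ℕ} (W : Fin p → Set (Fin n))
    (T : Finset (Fin n)) (h : (T.sort (· ≤ ·)).length = p) :
    phiW K W (eS K T) = Matrix.det (Matrix.of fun j k : Fin p =>
      indVec K W ((T.sort (· ≤ ·)).get (Fin.cast h.symm j)) k) := by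
  rw [eS, phiW_eProd, phiFam_cast K h]
  rfl

lemma phiW_eS_zero (K : Type*) [Field K] {n p : ℕ} (W : Fin p → Set (Fin n))
    (T : Finset (Fin n)) (h : (T.sort (· ≤ ·)).length ≠ p) :
    phiW K W (eS K T) = 0 := by
  rw [eS, phiW_eProd, phiFam_ne K h]
  simp

lemma nbb_phi (K : Type*) [Field K] {n : ℕ} (M : Matroid (Fin n))
    (hsimple : ∀ i j : Fin n, i ≠ j → M.Indep {i, j}) (π : Equiv.Perm (Fin n))
    (B : Finset (Fin n)) (hB : IsNbb M π B) :
    ∃ φ : ExteriorAlgebra K (Fin n → K) →ₗ[K] K,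
      (∀ z ∈ OSJ K M, φ z = 0) ∧ φ (eS K B) ≠ 0 ∧
      ∀ S : Finset (Fin n), φ (eS K S) ≠ 0 →
        S.card = B.card ∧ (∑ x ∈ B, (π x : ℕ)) ≤ (∑ x ∈ S, (π x : ℕ)) ∧
        ((∑ x ∈ S, (π x : ℕ)) = (∑ x ∈ B, (π x : ℕ)) → S = B) := by
  classical
  have hlB : (B.sort (· ≤ ·)).length = B.card := Finset.length_sort _
  set sB : Fin B.card → Fin n := fun k => (B.sort (· ≤ ·)).get (Fin.cast hlB.symm k) with hsB
  have hsB' : ∀ j, (B.sort (· ≤ ·)).get (Fin.cast hlB.symm j) = sB j :=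
    fun j => (congrFun hsB j).symm
  have hsBmem : ∀ k, sB k ∈ B := by
    intro k
    rw [← hsB']
    exact (Finset.mem_sort (α := Fin n) (· ≤ ·)).mp (List.get_mem _ _)
  have hsBinj : Function.Injective sB := by
    intro a b hab
    rw [← hsB', ← hsB'] at hab
    have hget := List.nodup_iff_injective_get.mp (Finset.sort_nodup B (· ≤ ·)) hab
    simpa [Fin.ext_iff] using hget
  set W : Fin B.card → Set (Fin n) := fun k => lineClosure M {j | j ∈ B ∧ π (sB k) ≤ π j}
    with hWdef
  have hWlc : ∀ k, IsLineClosed M (W k) := by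
    intro k; rw [hWdef]; exact isLineClosed_lineClosure M _
  have hWchain : ∀ k k', W k ⊆ W k' ∨ W k' ⊆ W k := by
    intro k k'
    rw [hWdef]
    rcases le_total (π (sB k)) (π (sB k')) with h | h
    · right
      exact lineClosure_mono M (fun x hx => ⟨hx.1, le_trans h hx.2⟩)
    · left
      exact lineClosure_mono M (fun x hx => ⟨hx.1, le_trans h hx.2⟩)
  have hmin : ∀ k, IsMinWrt π (W k) (sB k) := by
    intro k
    rw [hWdef]
    exact hB (sB k) (hsBmem k)
  have hmemW : ∀ j k, sB j ∈ W k ↔ π (sB k) ≤ π (sB j) := by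
    intro j k
    constructor
    · exact fun h => (hmin k).2 _ h
    · intro h
      rw [hWdef]
      exact subset_lineClosure M _ ⟨hsBmem j, h⟩
  have hBsum : ∑ x ∈ B, (π x : ℕ) = ∑ k : Fin B.card, (π (sB k) : ℕ) := by
    rw [sum_sort_get B (fun x => (π x : ℕ)) hlB]
  refine ⟨phiW K W, phiW_OSJ K M hsimple W hWlc hWchain, ?_, ?_⟩
  · -- diagonal entry: φ(e_B) = 1 ≠ 0
    rw [phiW_eS K W B hlB]
    have hval : (Matrix.of fun j k : Fin B.card =>
          indVec K W ((B.sort (· ≤ ·)).get (Fin.cast hlB.symm j)) k)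
        = Matrix.of fun j k : Fin B.card =>
            if π (sB k) ≤ π (sB j) then (1:K) else 0 := by
      ext j k
      simp only [Matrix.of_apply]
      rw [hsB']
      rcases Classical.em (π (sB k) ≤ π (sB j)) with hh | hh
      · rw [if_pos hh]
        exact indVec_of_mem K ((hmemW j k).mpr hh)
      · rw [if_neg hh]
        exact indVec_of_not_mem K (fun hm => hh ((hmemW j k).mp hm))
    rw [hval, det_perm_staircase K (fun j => π (sB j))
      (fun a b hab => hsBinj (π.injective hab))]
    exact one_ne_zero
  · -- general monomial
    intro S hS
    have hlS : (S.sort (· ≤ ·)).length = S.card := Finset.length_sort _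
    rcases Classical.em ((S.sort (· ≤ ·)).length = B.card) with h | h
    · have hcard : S.card = B.card := by rw [← hlS, h]
      rw [phiW_eS K W S h] at hS
      obtain ⟨σ, hσ⟩ := det_ne_zero_perm K _ hS
      have hWmem : ∀ k, (S.sort (· ≤ ·)).get (Fin.cast h.symm (σ k)) ∈ W k := by
        intro k
        by_contra hnm
        exact hσ k (by simpa using indVec_of_not_mem K hnm)
      have hdom : ∀ k, π (sB k) ≤ π ((S.sort (· ≤ ·)).get (Fin.cast h.symm (σ k))) :=
        fun k => (hmin k).2 _ (hWmem k)
      have hSsum : ∑ x ∈ S, (π x : ℕ)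
          = ∑ k : Fin B.card, (π ((S.sort (· ≤ ·)).get (Fin.cast h.symm (σ k))) : ℕ) := by
        rw [sum_sort_get S (fun x => (π x : ℕ)) h]
        exact (Equiv.sum_comp σ
          (fun k => (π ((S.sort (· ≤ ·)).get (Fin.cast h.symm k)) : ℕ))).symm
      have hdomN : ∀ k : Fin B.card, k ∈ Finset.univ → (π (sB k) : ℕ)
          ≤ (π ((S.sort (· ≤ ·)).get (Fin.cast h.symm (σ k))) : ℕ) :=
        fun k _ => by exact_mod_cast hdom k
      have hle : (∑ x ∈ B, (π x : ℕ)) ≤ ∑ x ∈ S, (π x : ℕ) := by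
        rw [hBsum, hSsum]
        exact Finset.sum_le_sum hdomN
      refine ⟨hcard, hle, ?_⟩
      intro heq
      have heq' : ∀ k : Fin B.card, k ∈ Finset.univ → (π (sB k) : ℕ)
          = (π ((S.sort (· ≤ ·)).get (Fin.cast h.symm (σ k))) : ℕ) := by
        have hsumeq : ∑ k : Fin B.card, (π (sB k) : ℕ)
            = ∑ k : Fin B.card, (π ((S.sort (· ≤ ·)).get (Fin.cast h.symm (σ k))) : ℕ) := by
          rw [← hBsum, ← hSsum, heq]
        exact (Finset.sum_eq_sum_iff_of_le hdomN).mp hsumeq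
      have hpt : ∀ k : Fin B.card,
          (S.sort (· ≤ ·)).get (Fin.cast h.symm (σ k)) = sB k := by
        intro k
        have := heq' k (Finset.mem_univ k)
        exact (π.injective (Fin.val_injective this.symm))
      have hsub : S ⊆ B := by
        intro x hx
        obtain ⟨q, hq⟩ := List.mem_iff_get.mp
          ((Finset.mem_sort (α := Fin n) (· ≤ ·)).mpr hx)
        have hxq : x = (S.sort (· ≤ ·)).get (Fin.cast h.symm (σ (σ.symm (Fin.cast h q)))) := by
          rw [Equiv.apply_symm_apply]
          rw [← hq]
          rfl
        rw [hxq, hpt]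
        exact hsBmem _
      have : B.card ≤ S.card := le_of_eq hcard.symm
      exact Finset.eq_of_subset_of_card_le hsub this
    · rw [phiW_eS_zero K W S h] at hS
      exact absurd rfl hS


/-- The monomials `ā_S`, for `S` an nbb set, are linearly independent in the quadratic
closure `Ā(G) = ℰ/𝒥`. -/
theorem nbb_monomials_linearIndependent (K : Type*) [Field K] {n : ℕ}
    (M : Matroid (Fin n)) (hE : M.E = Set.univ)
    (hsimple : ∀ i j : Fin n, i ≠ j → M.Indep {i, j}) (π : Equiv.Perm (Fin n)) :
    LinearIndependent K (fun S : {S : Finset (Fin n) // IsNbb M π S} =>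
      (Submodule.Quotient.mk (eS K S.1) :
        ExteriorAlgebra K (Fin n → K) ⧸ OSJ K M)) := by
  classical
  rw [linearIndependent_iff']
  intro sfin g hsum
  by_contra hcon
  push_neg at hcon
  obtain ⟨i0, hi0, hgi0⟩ := hcon
  have hmem : (∑ i ∈ sfin, g i • eS K i.1) ∈ OSJ K M := by
    have h0 : (Submodule.Quotient.mk (∑ i ∈ sfin, g i • eS K i.1) :
        ExteriorAlgebra K (Fin n → K) ⧸ OSJ K M) = 0 := by
      rw [← Submodule.mkQ_apply, map_sum]
      simp only [map_smul, Submodule.mkQ_apply]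
      exact hsum
    exact (Submodule.Quotient.mk_eq_zero _).mp h0
  set s' := sfin.filter (fun i => g i ≠ 0) with hs'
  have hne : s'.Nonempty := ⟨i0, Finset.mem_filter.mpr ⟨hi0, hgi0⟩⟩
  obtain ⟨Bm, hBm, hmax⟩ := Finset.exists_max_image s'
    (fun i => ∑ x ∈ i.1, (π x : ℕ)) hne
  obtain ⟨φ, hφJ, hφB, hφS⟩ := nbb_phi K M hsimple π Bm.1 Bm.2
  have hφ0 : φ (∑ i ∈ sfin, g i • eS K i.1) = 0 := hφJ _ hmem
  rw [map_sum] at hφ0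
  simp only [map_smul, smul_eq_mul] at hφ0
  have hred : ∑ i ∈ sfin, g i * φ (eS K i.1) = g Bm * φ (eS K Bm.1) := by
    apply Finset.sum_eq_single
    · intro b hb hbne
      rcases Classical.em (g b = 0) with hgb | hgb
      · rw [hgb, zero_mul]
      rcases Classical.em (φ (eS K b.1) = 0) with hfb | hfb
      · rw [hfb, mul_zero]
      obtain ⟨hcard, hle, heq⟩ := hφS b.1 hfb
      have hble : (∑ x ∈ b.1, (π x : ℕ)) ≤ ∑ x ∈ Bm.1, (π x : ℕ) :=
        hmax b (Finset.mem_filter.mpr ⟨hb, hgb⟩)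
      have hBeq : b.1 = Bm.1 := heq (le_antisymm hble hle)
      exact absurd (Subtype.ext hBeq) hbne
    · intro hBnot
      exact absurd (Finset.mem_filter.mp hBm).1 hBnot
  rw [hred] at hφ0
  rcases mul_eq_zero.mp hφ0 with h | h
  · exact (Finset.mem_filter.mp hBm).2 h
  · exact hφB h
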